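/- Let A be a simple finite-dimensional algebra over a field F of characteristic zero with a comultiplication Δ such that the Drinfeld double D(A) is a direct sum A₁ ⊕ A₂ of two proper simple ideals, let φ₁, φ₂ : A* → A be the linear maps with f − φᵢ(f) ∈ Aᵢ for all f ∈ A*, and let ψ : A → A* be the linear bijection with a = −φ₁(ψ(a)) + φ₂(ψ(a)) for all a ∈ A. Then the operator R : A → A defined by R(a) = φ₁(ψ(a)) is a Rota–Baxter operator of weight 1 on A. -/
import Mathlib


open TensorProduct

/-- `I` is a (two-sided) ideal for the product `prod`. -/
def IsIdealP {F M : Type*} [Field F] [AddCommGroup M] [Module F M]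
    (prod : M → M → M) (I : Submodule F M) : Prop :=
  ∀ x ∈ I, ∀ y : M, prod x y ∈ I ∧ prod y x ∈ I

/-- The ideal `I` is simple as an algebra with the restricted product. -/
def IsSimpleIdealP {F M : Type*} [Field F] [AddCommGroup M] [Module F M]
    (prod : M → M → M) (I : Submodule F M) : Prop :=
  (∃ x ∈ I, ∃ y ∈ I, prod x y ≠ 0) ∧
    ∀ J : Submodule F M, J ≤ I →
      (∀ x ∈ J, ∀ y ∈ I, prod x y ∈ J ∧ prod y x ∈ J) → J = ⊥ ∨ J = I

/-- The multiplication of the Drinfeld double `D(A) = A ⊕ A*` associated with the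
bilinear product `mul` and the comultiplication `Δ`:
`(a + f)(b + g) = (ab + f⇀b + a↼g) + (fg + f⇽b + a⇁g)`. -/
noncomputable def dmul {F A : Type*} [Field F] [AddCommGroup A] [Module F A]
    (mul : A →ₗ[F] A →ₗ[F] A) (Δ : A →ₗ[F] A ⊗[F] A)
    (p q : A × Module.Dual F A) : A × Module.Dual F A :=
  (mul p.1 q.1
      + TensorProduct.rid F A (LinearMap.lTensor A p.2 (Δ q.1))
      + TensorProduct.lid F A (LinearMap.rTensor A q.2 (Δ p.1)),
    Δ.dualMap (TensorProduct.dualDistrib F A A (p.2 ⊗ₜ[F] q.2))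
      + p.2.comp (mul q.1)
      + q.2.comp (mul.flip p.1))

/-- `R` is a Rota–Baxter operator of weight `lam` for the bilinear product `mul`. -/
def IsRotaBaxter {F L : Type*} [Field F] [AddCommGroup L] [Module F L]
    (mul : L →ₗ[F] L →ₗ[F] L) (R : L → L) (lam : F) : Prop :=
  ∀ x y : L, mul (R x) (R y) = R (mul (R x) y + mul x (R y) + lam • mul x y)

theorem stmt7 {F A : Type*} [Field F] [CharZero F] [AddCommGroup A] [Module F A]
    [FiniteDimensional F A] (mul : A →ₗ[F] A →ₗ[F] A)
    -- `A` is simple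
    (hsimple : (∃ x y : A, mul x y ≠ 0) ∧
      ∀ I : Submodule F A, (∀ x ∈ I, ∀ y : A, mul x y ∈ I ∧ mul y x ∈ I) → I = ⊥ ∨ I = ⊤)
    -- a comultiplication on `A`
    (Δ : A →ₗ[F] A ⊗[F] A)
    -- `D(A) = A₁ ⊕ A₂`, a direct sum of two proper simple ideals
    (A₁ A₂ : Submodule F (A × Module.Dual F A))
    (h1b : A₁ ≠ ⊥) (h1t : A₁ ≠ ⊤) (h2b : A₂ ≠ ⊥) (h2t : A₂ ≠ ⊤)
    (hcompl : IsCompl A₁ A₂)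
    (hid1 : IsIdealP (dmul mul Δ) A₁) (hid2 : IsIdealP (dmul mul Δ) A₂)
    (hs1 : IsSimpleIdealP (dmul mul Δ) A₁) (hs2 : IsSimpleIdealP (dmul mul Δ) A₂)
    -- the linear maps `φᵢ` with `f - φᵢ(f) ∈ Aᵢ` for all `f ∈ A*`
    (φ₁ φ₂ : Module.Dual F A →ₗ[F] A)
    (hφ1 : ∀ f : Module.Dual F A, ((-φ₁ f, f) : A × Module.Dual F A) ∈ A₁)
    (hφ2 : ∀ f : Module.Dual F A, ((-φ₂ f, f) : A × Module.Dual F A) ∈ A₂)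
    -- the linear bijection `ψ` with `a = -φ₁(ψ a) + φ₂(ψ a)` for all `a ∈ A`
    (ψ : A →ₗ[F] Module.Dual F A) (hψbij : Function.Bijective ψ)
    (hψ : ∀ c : A, c = -φ₁ (ψ c) + φ₂ (ψ c))
    :
    IsRotaBaxter mul (fun c => φ₁ (ψ c)) (1 : F) := by
  classical
  have dsub_l : ∀ p p' q : A × Module.Dual F A,
      dmul mul Δ (p - p') q = dmul mul Δ p q - dmul mul Δ p' q := by
    intro p p' q
    simp only [dmul, Prod.fst_sub, Prod.snd_sub, map_sub, LinearMap.sub_apply,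
      LinearMap.lTensor_sub, LinearMap.rTensor_sub, sub_tmul, LinearMap.sub_comp,
      LinearMap.comp_sub, Prod.mk_sub_mk]
    simp only [Prod.mk.injEq]
    constructor <;> abel
  have dsub_r : ∀ p q q' : A × Module.Dual F A,
      dmul mul Δ p (q - q') = dmul mul Δ p q - dmul mul Δ p q' := by
    intro p q q'
    simp only [dmul, Prod.fst_sub, Prod.snd_sub, map_sub, LinearMap.sub_apply,
      LinearMap.lTensor_sub, LinearMap.rTensor_sub, tmul_sub, LinearMap.sub_comp,
      LinearMap.comp_sub, Prod.mk_sub_mk]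
    simp only [Prod.mk.injEq]
    constructor <;> abel
  set u : A → A × Module.Dual F A := fun a => (-φ₁ (ψ a), ψ a) with hu_def
  set v : A → A × Module.Dual F A := fun a => (-φ₂ (ψ a), ψ a) with hv_def
  have hu : ∀ a, u a ∈ A₁ := fun a => hφ1 (ψ a)
  have hv : ∀ a, v a ∈ A₂ := fun a => hφ2 (ψ a)
  have hsplit : ∀ a : A, ((a, 0) : A × Module.Dual F A) = u a - v a := by
    intro a
    simp only [hu_def, hv_def, Prod.mk_sub_mk, sub_self, Prod.mk.injEq, and_true]
    conv_lhs => rw [hψ a]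
    abel
  have hcross : ∀ x ∈ A₁, ∀ y ∈ A₂, dmul mul Δ x y = 0 ∧ dmul mul Δ y x = 0 := by
    intro x hx y hy
    constructor
    · exact Submodule.disjoint_def.mp hcompl.disjoint _ ((hid1 x hx y).1)
        ((hid2 y hy x).2)
    · exact Submodule.disjoint_def.mp hcompl.disjoint _ ((hid1 x hx y).2)
        ((hid2 y hy x).1)
  have hab : ∀ a b : A,
      dmul mul Δ ((a, 0) : A × Module.Dual F A) ((b, 0) : A × Module.Dual F A)
        = ((mul a b, 0) : A × Module.Dual F A) := by
    intro a b; simp [dmul]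
  have keyC : ∀ a b : A, dmul mul Δ (u a) (u b) = u (mul a b) := by
    intro a b
    have e1 : dmul mul Δ (u a) (u b) + dmul mul Δ (v a) (v b)
        = u (mul a b) + -(v (mul a b)) := by
      have h0 : dmul mul Δ ((a, 0) : A × Module.Dual F A) ((b, 0)) =
          dmul mul Δ (u a) (u b) + dmul mul Δ (v a) (v b) := by
        rw [hsplit a, hsplit b, dsub_l, dsub_r, dsub_r,
          (hcross _ (hu a) _ (hv b)).1, (hcross _ (hu b) _ (hv a)).2]
        abel
      rw [hab] at h0
      rw [← h0, hsplit (mul a b)]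
      abel
    have e2 : dmul mul Δ (u a) (u b) - u (mul a b)
        = -(v (mul a b)) - dmul mul Δ (v a) (v b) := by
      rw [sub_eq_sub_iff_add_eq_add, e1]; abel
    have m1 : dmul mul Δ (u a) (u b) - u (mul a b) ∈ A₁ :=
      sub_mem (hid1 _ (hu a) (u b)).1 (hu (mul a b))
    have m2 : dmul mul Δ (u a) (u b) - u (mul a b) ∈ A₂ := by
      rw [e2]; exact sub_mem (neg_mem (hv (mul a b))) (hid2 _ (hv a) (v b)).1
    have h := Submodule.disjoint_def.mp hcompl.disjoint _ m1 m2
    rw [sub_eq_zero] at h; exact h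
  have keyA : ∀ a b : A,
      dmul mul Δ (u a) ((b, 0) : A × Module.Dual F A) = u (mul a b) := by
    intro a b
    rw [hsplit b, dsub_r, (hcross _ (hu a) _ (hv b)).1, sub_zero, keyC]
  have keyB : ∀ a b : A,
      dmul mul Δ ((a, 0) : A × Module.Dual F A) (u b) = u (mul a b) := by
    intro a b
    rw [hsplit a, dsub_l, (hcross _ (hu b) _ (hv a)).2, sub_zero, keyC]
  set R : A → A := fun c => φ₁ (ψ c) with hR
  set T : A → A → A := fun a b => TensorProduct.rid F A (LinearMap.lTensor A (ψ a) (Δ b)) with hT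
  set S : A → A → A := fun a b => TensorProduct.lid F A (LinearMap.rTensor A (ψ b) (Δ a)) with hS
  have eT : ∀ a b : A, T a b = mul (R a) b - R (mul a b) := by
    intro a b
    have h := congrArg Prod.fst (keyA a b)
    simp only [dmul, hu_def, hT, hR, map_neg, LinearMap.neg_apply,
      LinearMap.rTensor_zero, LinearMap.zero_apply, map_zero, neg_zero,
      add_zero] at h ⊢
    rw [← sub_eq_zero] at h ⊢
    rw [← h]; abel
  have eS : ∀ a b : A, S a b = mul a (R b) - R (mul a b) := by
    intro a b
    have h := congrArg Prod.fst (keyB a b)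
    simp only [dmul, hu_def, hS, hR, map_neg, LinearMap.neg_apply,
      LinearMap.lTensor_zero, LinearMap.zero_apply, map_zero, neg_zero,
      zero_add, add_zero] at h ⊢
    rw [← sub_eq_zero] at h ⊢
    rw [← h]; abel
  have eC : ∀ a b : A,
      mul (R a) (R b) - T a (R b) - S (R a) b = -R (mul a b) := by
    intro a b
    have h := congrArg Prod.fst (keyC a b)
    simp only [dmul, hu_def, hT, hS, hR, map_neg, LinearMap.neg_apply] at h ⊢
    rw [← sub_eq_zero] at h ⊢
    rw [← h]; abel
  intro x y
  have h1 := eT x (R y)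
  have h2 := eS (R x) y
  have h3 := eC x y
  rw [h1, h2] at h3
  have hRadd : ∀ p q : A, R (p + q) = R p + R q := by
    intro p q; simp only [hR, map_add]
  simp only [one_smul]
  rw [hRadd, hRadd]
  rw [← sub_eq_zero] at h3 ⊢
  rw [← neg_eq_zero] at h3
  rw [← h3]; abel
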